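/- Let R be a commutative local ring with maximal ideal m = (2), m² = 0. Any R-linear map f : A → B between finitely generated free R-modules is equivalent, after composing with isomorphisms on source and target, to a map of the form diag(1,…,1,2,…,2,0,…,0), i.e., there exist decompositions A ≅ W ⊕ X ⊕ Y and B ≅ W ⊕ X ⊕ Z under which f corresponds to (w,x,y) ↦ (w, 2x, 0). -/

import Mathlib

open Module IsLocalRing LinearMap

section Aux

universe u v w

variable {R : Type u} [CommRing R] [IsLocalRing R]

/-- `Fin.cons` as a linear equivalence. -/
def consL (n : ℕ) (R : Type u) [CommRing R] : (R × (Fin n → R)) ≃ₗ[R] (Fin (n + 1) → R) where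
  toFun p := Fin.cons p.1 p.2
  invFun g := (g 0, fun j => g j.succ)
  map_add' p q := by
    funext i
    refine Fin.cases ?_ (fun j => ?_) i <;> simp
  map_smul' c p := by
    funext i
    refine Fin.cases ?_ (fun j => ?_) i <;> simp
  left_inv p := by simp
  right_inv g := by
    funext i
    refine Fin.cases ?_ (fun j => ?_) i <;> simp

/-- Shuffle for the `d = 1` case. -/
def shuffle1 (R : Type u) [CommRing R] (p q r : ℕ) :
    (R × ((Fin p → R) × (Fin q → R) × (Fin r → R))) ≃ₗ[R]
      ((Fin (p + 1) → R) × (Fin q → R) × (Fin r → R)) :=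
  (LinearEquiv.prodAssoc R R (Fin p → R) ((Fin q → R) × (Fin r → R))).symm.trans
    ((consL p R).prodCongr (LinearEquiv.refl R _))

@[simp] lemma shuffle1_apply (p q r : ℕ) (t : R) (w₁ : Fin p → R) (w₂ : Fin q → R)
    (w₃ : Fin r → R) : shuffle1 R p q r (t, (w₁, w₂, w₃)) = (Fin.cons t w₁, w₂, w₃) := rfl

/-- Shuffle for the `d = 2` case. -/
def shuffle2 (R : Type u) [CommRing R] (p q r : ℕ) :
    (R × ((Fin p → R) × (Fin q → R) × (Fin r → R))) ≃ₗ[R]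
      ((Fin p → R) × (Fin (q + 1) → R) × (Fin r → R)) :=
  (LinearEquiv.prodAssoc R R (Fin p → R) ((Fin q → R) × (Fin r → R))).symm.trans
    (((LinearEquiv.prodComm R R (Fin p → R)).prodCongr (LinearEquiv.refl R _)).trans
      ((LinearEquiv.prodAssoc R (Fin p → R) R ((Fin q → R) × (Fin r → R))).trans
        ((LinearEquiv.refl R (Fin p → R)).prodCongr
          ((LinearEquiv.prodAssoc R R (Fin q → R) (Fin r → R)).symm.trans
            ((consL q R).prodCongr (LinearEquiv.refl R _))))))

@[simp] lemma shuffle2_apply (p q r : ℕ) (t : R) (w₁ : Fin p → R) (w₂ : Fin q → R)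
    (w₃ : Fin r → R) : shuffle2 R p q r (t, (w₁, w₂, w₃)) = (w₁, Fin.cons t w₂, w₃) := rfl

lemma smul_fin_cons (n : ℕ) (c t : R) (w : Fin n → R) :
    c • (Fin.cons t w : Fin (n + 1) → R) = Fin.cons (c * t) (c • w) := by
  funext i
  refine Fin.cases ?_ (fun j => ?_) i <;> simp

/-- Padding equivalence for the zero map case. -/
def padL (M : Type v) [AddCommGroup M] [Module R M] :
    M ≃ₗ[R] (Fin 0 → R) × (Fin 0 → R) × M where
  toFun x := (0, 0, x)
  invFun p := p.2.2
  map_add' x y :=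
    Prod.ext (Subsingleton.elim _ _) (Prod.ext (Subsingleton.elim _ _) rfl)
  map_smul' c x :=
    Prod.ext (Subsingleton.elim _ _) (Prod.ext (Subsingleton.elim _ _) rfl)
  left_inv x := rfl
  right_inv p :=
    Prod.ext (Subsingleton.elim _ _) (Prod.ext (Subsingleton.elim _ _) rfl)

lemma isUnit_of_not_mem_max {x : R} (hx : x ∉ maximalIdeal R) : IsUnit x := by
  by_contra h
  exact hx ((mem_maximalIdeal x).mpr (mem_nonunits_iff.mpr h))

variable (hm : maximalIdeal R = Ideal.span {(2 : R)})
  (hne : maximalIdeal R ≠ ⊥) (hsq : maximalIdeal R ^ 2 = ⊥)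

include hm hsq in
lemma two_mul_two : (2 : R) * 2 = 0 := by
  have h2 : (2 : R) ∈ maximalIdeal R := by
    rw [hm]; exact Ideal.mem_span_singleton_self 2
  have h4 : (2 : R) * 2 ∈ maximalIdeal R ^ 2 := by
    rw [pow_two]; exact Ideal.mul_mem_mul h2 h2
  rwa [hsq, Submodule.mem_bot] at h4

include hm hne in
lemma mem_of_two_mul_eq_zero {x : R} (hx : 2 * x = 0) : x ∈ maximalIdeal R := by
  by_contra h
  have hu := isUnit_of_not_mem_max h
  have h2 : (2 : R) = 0 := by
    calc (2 : R) = 2 * x * ↑hu.unit⁻¹ := by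
          rw [mul_assoc, IsUnit.mul_val_inv, mul_one]
      _ = 0 := by rw [hx, zero_mul]
  exact hne (by rw [hm, h2, Ideal.span_singleton_eq_bot.mpr rfl])

include hm in
lemma exists_coord {M : Type v} [AddCommGroup M] [Module R M] [Module.Free R M]
    [Module.Finite R M] {b : M} (hb : ¬∃ y, b = (2 : R) • y) :
    ∃ φ : M →ₗ[R] R, φ b = 1 := by
  classical
  set 𝒷 := Module.Free.chooseBasis R M with h𝒷
  by_cases h : ∀ i, 𝒷.repr b i ∈ maximalIdeal R
  · exfalso
    apply hb
    have h' : ∀ i, ∃ c, c * 2 = 𝒷.repr b i := fun i =>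
      Ideal.mem_span_singleton'.mp (hm ▸ h i)
    choose c hc using h'
    refine ⟨∑ i, c i • 𝒷 i, ?_⟩
    rw [Finset.smul_sum]
    conv_lhs => rw [← 𝒷.sum_repr b]
    refine Finset.sum_congr rfl fun i _ => ?_
    rw [smul_smul, ← hc i, mul_comm]
  · push_neg at h
    obtain ⟨i, hi⟩ := h
    have hu := isUnit_of_not_mem_max hi
    refine ⟨(↑hu.unit⁻¹ : R) • 𝒷.coord i, ?_⟩
    simp only [LinearMap.smul_apply, Basis.coord_apply, smul_eq_mul]
    exact hu.val_inv_mul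

lemma exists_half {M : Type v} [AddCommGroup M] [Module R M] [Module.Free R M]
    [Module.Finite R M] (ψ : M →ₗ[R] R) (h : ∀ x, ∃ c, ψ x = 2 * c) :
    ∃ ψ' : M →ₗ[R] R, ∀ x, ψ x = 2 * ψ' x := by
  classical
  set 𝒷 := Module.Free.chooseBasis R M with h𝒷
  choose c hc using fun i => h (𝒷 i)
  refine ⟨𝒷.constr ℕ c, fun x => ?_⟩
  have heq : ψ = (2 : R) • 𝒷.constr ℕ c := by
    refine 𝒷.ext fun i => ?_
    simp [hc i]
  rw [heq]
  simp

lemma ker_finite_free {M : Type v} [AddCommGroup M] [Module R M] [Module.Free R M]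
    [Module.Finite R M] (χ : M →ₗ[R] R) {a : M} (ha : χ a = 1) :
    Module.Finite R (LinearMap.ker χ) ∧ Module.Free R (LinearMap.ker χ) := by
  have hker : ∀ x : M, x - χ x • a ∈ LinearMap.ker χ := fun x => by
    simp [LinearMap.mem_ker, ha]
  let π : M →ₗ[R] LinearMap.ker χ :=
    LinearMap.codRestrict _ (LinearMap.id - χ.smulRight a) hker
  have hπ : ∀ y : LinearMap.ker χ, π (y : M) = y := by
    rintro ⟨y, hy⟩
    have hy' : χ y = 0 := hy
    apply Subtype.ext
    change y - χ y • a = y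
    simp [hy']
  have hfin : Module.Finite R (LinearMap.ker χ) :=
    Module.Finite.of_surjective π (fun y => ⟨y, hπ y⟩)
  have hproj : Module.Projective R (LinearMap.ker χ) :=
    Module.Projective.of_split (LinearMap.ker χ).subtype π (by ext y; simp [hπ])
  haveI := hfin
  haveI := hproj
  haveI := Module.finitePresentation_of_projective R (LinearMap.ker χ)
  exact ⟨hfin, Module.free_of_flat_of_isLocalRing⟩

lemma split_step {A : Type v} {B : Type w} [AddCommGroup A] [Module R A]
    [AddCommGroup B] [Module R B] (f : A →ₗ[R] B) (χ : A →ₗ[R] R) (φ : B →ₗ[R] R)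
    (a : A) (b : B) (d : R) (hχ : χ a = 1) (hφ : φ b = 1) (hfa : f a = d • b)
    (hcomp : ∀ x, φ (f x) = d * χ x) :
    ∃ (f' : LinearMap.ker χ →ₗ[R] LinearMap.ker φ)
      (eA : A ≃ₗ[R] R × LinearMap.ker χ) (eB : B ≃ₗ[R] R × LinearMap.ker φ),
      ∀ x, eB (f x) = (d * (eA x).1, f' (eA x).2) := by
  have hkerA : ∀ x : A, x - χ x • a ∈ LinearMap.ker χ := fun x => by
    simp [LinearMap.mem_ker, hχ]
  have hkerB : ∀ y : B, y - φ y • b ∈ LinearMap.ker φ := fun y => by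
    simp [LinearMap.mem_ker, hφ]
  have hf' : ∀ y : LinearMap.ker χ, f (y : A) ∈ LinearMap.ker φ := fun y => by
    have hy : χ (y : A) = 0 := y.2
    simp [LinearMap.mem_ker, hcomp, hy]
  refine ⟨LinearMap.codRestrict _ (f.comp (LinearMap.ker χ).subtype) hf', ?_, ?_, ?_⟩
  · exact
    { toFun := fun x => (χ x, ⟨x - χ x • a, hkerA x⟩)
      invFun := fun p => p.1 • a + (p.2 : A)
      map_add' := fun x y => by
        refine Prod.ext (by simp) (Subtype.ext ?_)
        simp only [map_add, add_smul, Prod.snd_add, Submodule.coe_add]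
        abel
      map_smul' := fun c x => by
        refine Prod.ext (by simp) (Subtype.ext ?_)
        simp [smul_smul, smul_sub]
      left_inv := fun x => by simp
      right_inv := fun p => by
        have hy : χ (p.2 : A) = 0 := p.2.2
        refine Prod.ext (by simp [hχ, hy]) (Subtype.ext ?_)
        simp [hχ, hy] }
  · exact
    { toFun := fun x => (φ x, ⟨x - φ x • b, hkerB x⟩)
      invFun := fun p => p.1 • b + (p.2 : B)
      map_add' := fun x y => by
        refine Prod.ext (by simp) (Subtype.ext ?_)
        simp only [map_add, add_smul, Prod.snd_add, Submodule.coe_add]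
        abel
      map_smul' := fun c x => by
        refine Prod.ext (by simp) (Subtype.ext ?_)
        simp [smul_smul, smul_sub]
      left_inv := fun x => by simp
      right_inv := fun p => by
        have hy : φ (p.2 : B) = 0 := p.2.2
        refine Prod.ext (by simp [hφ, hy]) (Subtype.ext ?_)
        simp [hφ, hy] }
  · intro x
    refine Prod.ext (by simp [hcomp]) (Subtype.ext ?_)
    simp only [LinearEquiv.coe_mk, LinearMap.codRestrict_apply, LinearMap.coe_comp,
      Function.comp_apply, Submodule.coe_subtype]
    change f x - φ (f x) • b = f (x - χ x • a)
    rw [map_sub, map_smul, hfa, hcomp, smul_smul, mul_comm (χ x) d]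

include hm hne hsq in
lemma main_aux : ∀ (n : ℕ) (A : Type v) (B : Type w) [AddCommGroup A]
    [Module R A] [Module.Free R A] [Module.Finite R A]
    [AddCommGroup B] [Module R B] [Module.Free R B] [Module.Finite R B]
    (f : A →ₗ[R] B), finrank R A ≤ n →
    ∃ (p q r s : ℕ)
      (eA : A ≃ₗ[R] (Fin p → R) × (Fin q → R) × (Fin r → R))
      (eB : B ≃ₗ[R] (Fin p → R) × (Fin q → R) × (Fin s → R)),
      ∀ a : A, eB (f a) = ((eA a).1, (2 : R) • (eA a).2.1, 0) := by
  intro n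
  induction n with
  | zero =>
    intro A B _ _ _ _ _ _ _ _ f hn
    have h0 : finrank R A = 0 := Nat.le_zero.mp hn
    have e0 : A ≃ₗ[R] (Fin 0 → R) := (finBasisOfFinrankEq R A h0).equivFun
    have : Subsingleton A := e0.toEquiv.subsingleton
    refine ⟨0, 0, finrank R A, finrank R B,
      (finBasis R A).equivFun.trans (padL _), (finBasis R B).equivFun.trans (padL _), ?_⟩
    intro x
    have hx : x = 0 := Subsingleton.elim x 0
    subst hx
    simp only [map_zero]
    exact Prod.ext (Subsingleton.elim _ _) (Prod.ext (Subsingleton.elim _ _) (by simp))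
  | succ n ih =>
    intro A B _ _ _ _ _ _ _ _ f hn
    by_cases hf : f = 0
    · refine ⟨0, 0, finrank R A, finrank R B,
        (finBasis R A).equivFun.trans (padL _), (finBasis R B).equivFun.trans (padL _), ?_⟩
      intro x
      subst hf
      simp only [LinearMap.zero_apply, map_zero]
      exact Prod.ext (Subsingleton.elim _ _) (Prod.ext (Subsingleton.elim _ _) (by simp))
    · have hdata : ∃ (χ : A →ₗ[R] R) (φ : B →ₗ[R] R) (a : A) (b : B) (d : R),
          χ a = 1 ∧ φ b = 1 ∧ f a = d • b ∧ (∀ x, φ (f x) = d * χ x) ∧ (d = 1 ∨ d = 2) := by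
        by_cases hcase : ∀ x, ∃ y, f x = (2 : R) • y
        · -- all values divisible by 2
          obtain ⟨a, ha⟩ : ∃ a, f a ≠ 0 := by
            by_contra h
            push_neg at h
            exact hf (LinearMap.ext fun x => h x)
          obtain ⟨b₀, hb₀⟩ := hcase a
          have hb₀' : ¬∃ y, b₀ = (2 : R) • y := by
            rintro ⟨y, rfl⟩
            apply ha
            rw [hb₀, smul_smul, two_mul_two hm hsq, zero_smul]
          obtain ⟨φ, hφ⟩ := exists_coord hm hb₀'
          have hψ : ∀ x, ∃ c, (φ.comp f) x = 2 * c := by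
            intro x
            obtain ⟨y, hy⟩ := hcase x
            exact ⟨φ y, by simp [hy]⟩
          obtain ⟨ψ', hψ'⟩ := exists_half (φ.comp f) hψ
          set u := ψ' a with hu_def
          have h2u : 2 * u = 2 := by
            have h := hψ' a
            rw [LinearMap.comp_apply, hb₀, map_smul, hφ, smul_eq_mul, mul_one] at h
            exact h.symm
          have hu1 : u - 1 ∈ maximalIdeal R := by
            refine mem_of_two_mul_eq_zero hm hne ?_
            rw [mul_sub, h2u, mul_one, sub_self]
          have hunotin : u ∉ maximalIdeal R := by
            intro hmem
            have h1 : (1 : R) ∈ maximalIdeal R := by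
              have := Ideal.sub_mem _ hmem hu1
              simpa using this
            exact one_notMem_nonunits ((mem_maximalIdeal 1).mp h1)
          have hu : IsUnit u := isUnit_of_not_mem_max hunotin
          have h2inv : (2 : R) * ↑hu.unit⁻¹ = 2 := by
            have h := mul_assoc (2 : R) u ↑hu.unit⁻¹
            rw [h2u, IsUnit.mul_val_inv, mul_one] at h
            exact h
          refine ⟨(↑hu.unit⁻¹ : R) • ψ', φ, a, b₀, 2, ?_, hφ, hb₀, ?_, Or.inr rfl⟩
          · simp only [LinearMap.smul_apply, smul_eq_mul, ← hu_def]
            exact hu.val_inv_mul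
          · intro x
            have h := hψ' x
            rw [LinearMap.comp_apply] at h
            rw [h]
            simp only [LinearMap.smul_apply, smul_eq_mul, ← mul_assoc, h2inv]
        · push_neg at hcase
          obtain ⟨a, ha⟩ := hcase
          have ha' : ¬∃ y, f a = (2 : R) • y := by
            rintro ⟨y, hy⟩
            exact ha y hy
          obtain ⟨φ, hφ⟩ := exists_coord hm ha'
          refine ⟨φ.comp f, φ, a, f a, 1, by simpa using hφ, hφ,
            (one_smul R (f a)).symm, fun x => by simp, Or.inl rfl⟩
      obtain ⟨χ, φ, a, b, d, hχ, hφ, hfa, hcomp, hd⟩ := hdata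
      obtain ⟨f', eA1, eB1, hsp⟩ := split_step f χ φ a b d hχ hφ hfa hcomp
      obtain ⟨hAfin, hAfree⟩ := ker_finite_free χ hχ
      obtain ⟨hBfin, hBfree⟩ := ker_finite_free φ hφ
      haveI := hAfin; haveI := hAfree; haveI := hBfin; haveI := hBfree
      have hrank : finrank R (LinearMap.ker χ) ≤ n := by
        have h1 : finrank R A = finrank R (R × LinearMap.ker χ) := eA1.finrank_eq
        rw [Module.finrank_prod, finrank_self] at h1
        omega
      obtain ⟨p, q, r, s, e'A, e'B, hmain⟩ := ih (LinearMap.ker χ) (LinearMap.ker φ) f' hrank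
      rcases hd with rfl | rfl
      · -- d = 1 : new index goes into the `p` block
        refine ⟨p + 1, q, r, s,
          (eA1.trans ((LinearEquiv.refl R R).prodCongr e'A)).trans (shuffle1 R p q r),
          (eB1.trans ((LinearEquiv.refl R R).prodCongr e'B)).trans (shuffle1 R p q s), ?_⟩
        intro x
        have h1 := hsp x
        have h2 := hmain (eA1 x).2
        simp only [LinearEquiv.trans_apply, LinearEquiv.prodCongr_apply, LinearEquiv.refl_apply,
          h1, h2, one_mul]
        rw [show (e'A (eA1 x).2 : (Fin p → R) × (Fin q → R) × (Fin r → R)) =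
          ((e'A (eA1 x).2).1, (e'A (eA1 x).2).2.1, (e'A (eA1 x).2).2.2) from rfl]
        rw [shuffle1_apply, shuffle1_apply]
      · -- d = 2 : new index goes into the `q` block
        refine ⟨p, q + 1, r, s,
          (eA1.trans ((LinearEquiv.refl R R).prodCongr e'A)).trans (shuffle2 R p q r),
          (eB1.trans ((LinearEquiv.refl R R).prodCongr e'B)).trans (shuffle2 R p q s), ?_⟩
        intro x
        have h1 := hsp x
        have h2 := hmain (eA1 x).2
        simp only [LinearEquiv.trans_apply, LinearEquiv.prodCongr_apply, LinearEquiv.refl_apply,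
          h1, h2]
        rw [show (e'A (eA1 x).2 : (Fin p → R) × (Fin q → R) × (Fin r → R)) =
          ((e'A (eA1 x).2).1, (e'A (eA1 x).2).2.1, (e'A (eA1 x).2).2.2) from rfl]
        rw [shuffle2_apply, shuffle2_apply, smul_fin_cons]

end Aux

/-- Over a commutative local ring `R` with `m = (2)`, `m² = 0`, any `R`-linear map between
finitely generated free modules is, after composing with isomorphisms on source and target,
of the form `diag(1,…,1,2,…,2,0,…,0)`: there are decompositions `A ≅ W ⊕ X ⊕ Y` and
`B ≅ W ⊕ X ⊕ Z` under which `f` corresponds to `(w, x, y) ↦ (w, 2 • x, 0)`. -/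
theorem stmt_2 (R : Type*) [CommRing R] [IsLocalRing R]
    (hm : IsLocalRing.maximalIdeal R = Ideal.span {(2 : R)})
    (hne : IsLocalRing.maximalIdeal R ≠ ⊥)
    (hsq : IsLocalRing.maximalIdeal R ^ 2 = ⊥)
    (A B : Type*) [AddCommGroup A] [Module R A] [Module.Free R A] [Module.Finite R A]
    [AddCommGroup B] [Module R B] [Module.Free R B] [Module.Finite R B]
    (f : A →ₗ[R] B) :
    ∃ (p q r s : ℕ)
      (eA : A ≃ₗ[R] (Fin p → R) × (Fin q → R) × (Fin r → R))
      (eB : B ≃ₗ[R] (Fin p → R) × (Fin q → R) × (Fin s → R)),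
      ∀ a : A, eB (f a) = ((eA a).1, (2 : R) • (eA a).2.1, 0) := by
  exact main_aux hm hne hsq (Module.finrank R A) A B f le_rfl
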